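/- Let β > 0 and α ≥ 0 with 2α ≤ 1. The function h(y) = y/(β(1 - e^{-y(1+αy)})) for y > 0, extended by h(0) = 1/β, is strictly increasing on [0, ∞) and tends to ∞ as y → ∞. -/

import Mathlib

open Real Set Filter

section aux
variable (α : ℝ)

lemma g_hasDeriv (x : ℝ) : HasDerivAt (fun y : ℝ => y * (1 + α * y)) (1 + 2 * α * x) x := by
  have h := (hasDerivAt_id x).mul ((hasDerivAt_const x (1:ℝ)).add ((hasDerivAt_const x α).mul (hasDerivAt_id x)))
  refine HasDerivAt.congr_deriv h ?_
  simp only [id_eq, Pi.add_apply, Pi.mul_apply]; ring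

lemma F_hasDeriv (x : ℝ) :
    HasDerivAt (fun y : ℝ => 1 - Real.exp (-(y * (1 + α * y))))
      ((1 + 2 * α * x) * Real.exp (-(x * (1 + α * x)))) x := by
  have h1 : HasDerivAt (fun y : ℝ => -(y * (1 + α * y))) (-(1 + 2 * α * x)) x := (g_hasDeriv α x).neg
  have h2 := (Real.hasDerivAt_exp _).comp x h1
  have h3 := ((hasDerivAt_const x (1:ℝ)).sub h2)
  refine HasDerivAt.congr_deriv h3 ?_
  ring
end aux

theorem y_isocline_strictMono (α β : ℝ) (hα : 0 ≤ α) (hα2 : 2 * α ≤ 1) (hβ : 0 < β) :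
    let h : ℝ → ℝ := fun y =>
      if y = 0 then 1 / β else y / (β * (1 - Real.exp (-(y * (1 + α * y)))))
    StrictMonoOn h (Set.Ici 0) ∧ Filter.Tendsto h Filter.atTop Filter.atTop := by
  intro h
  -- basic positivity of 1 - exp(-g y) for y > 0
  have hg_pos : ∀ y : ℝ, 0 < y → 0 < y * (1 + α * y) := by
    intro y hy; positivity
  have hden : ∀ y : ℝ, 0 < y → 0 < 1 - Real.exp (-(y * (1 + α * y))) := by
    intro y hy
    have := Real.exp_lt_one_iff.mpr (by linarith [hg_pos y hy] : -(y * (1 + α * y)) < 0)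
    linarith
  -- (i) : 1 - exp(-(g b)) < b for b > 0
  have key0 : ∀ b : ℝ, 0 < b → 1 - Real.exp (-(b * (1 + α * b))) < b := by
    intro b hb
    set k : ℝ → ℝ := fun y => y - 1 + Real.exp (-(y * (1 + α * y))) with hk
    have hmono : StrictMonoOn k (Set.Ici 0) := by
      apply strictMonoOn_of_deriv_pos (convex_Ici 0)
      · fun_prop
      · intro x hx
        rw [interior_Ici] at hx
        have hx : 0 < x := hx
        have hd : HasDerivAt k (1 - (1 + 2 * α * x) * Real.exp (-(x * (1 + α * x)))) x := by
          have h2 := (Real.hasDerivAt_exp _).comp x ((g_hasDeriv α x).neg)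
          have h3 := ((hasDerivAt_id x).sub_const 1).add h2
          refine HasDerivAt.congr_deriv h3 ?_
          simp only [Pi.neg_apply]; ring
        rw [hd.deriv]
        have hgx := hg_pos x hx
        have hexp : x * (1 + α * x) + 1 < Real.exp (x * (1 + α * x)) :=
          Real.add_one_lt_exp (by positivity)
        have hle : 1 + 2 * α * x ≤ 1 + x * (1 + α * x) := by nlinarith
        have hpos : (0:ℝ) < Real.exp (x * (1 + α * x)) := Real.exp_pos _
        have h2 : (1 + 2 * α * x) * Real.exp (-(x * (1 + α * x))) < 1 := by
          rw [Real.exp_neg]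
          rw [mul_inv_lt_iff₀ hpos, one_mul]
          linarith
        linarith
    have := hmono (Set.self_mem_Ici) (Set.mem_Ici.mpr hb.le) hb
    simp only [hk] at this
    simp at this
    linarith [this]
  -- (ii) : psi strictly anti on Ioi 0
  set ψ : ℝ → ℝ := fun y => (1 - Real.exp (-(y * (1 + α * y)))) / y with hψ
  have hanti : StrictAntiOn ψ (Set.Ioi 0) := by
    apply strictAntiOn_of_deriv_neg (convex_Ioi 0)
    · apply ContinuousOn.div
      · fun_prop
      · fun_prop
      · intro x hx; exact ne_of_gt hx
    · intro x hx
      rw [interior_Ioi] at hx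
      have hx : 0 < x := hx
      have hd : HasDerivAt ψ
          (((1 + 2 * α * x) * Real.exp (-(x * (1 + α * x))) * x
            - (1 - Real.exp (-(x * (1 + α * x)))) * 1) / x ^ 2) x :=
        (F_hasDeriv α x).div (hasDerivAt_id x) (ne_of_gt hx)
      rw [hd.deriv]
      apply div_neg_of_neg_of_pos _ (by positivity)
      -- numerator < 0  ⟺  (1 + x + 2αx²) e^{-g} < 1  ⟺  1 + x + 2αx² < e^g
      have hgx := hg_pos x hx
      have hq : 1 + x * (1 + α * x) + (x * (1 + α * x)) ^ 2 / 2
          ≤ Real.exp (x * (1 + α * x)) := Real.quadratic_le_exp_of_nonneg hgx.le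
      have hstep : 1 + x + 2 * α * x ^ 2 < 1 + x * (1 + α * x) + (x * (1 + α * x)) ^ 2 / 2 := by
        nlinarith [mul_nonneg (by linarith : (0:ℝ) ≤ 1 - 2*α) (sq_nonneg x),
          mul_nonneg (mul_nonneg (mul_nonneg hα hx.le) hx.le) hx.le,
          sq_nonneg (α * x ^ 2), mul_pos hx hx]
      have hE : 1 + x + 2 * α * x ^ 2 < Real.exp (x * (1 + α * x)) := lt_of_lt_of_le hstep hq
      have hpos : (0:ℝ) < Real.exp (x * (1 + α * x)) := Real.exp_pos _
      have h2 : (1 + x + 2 * α * x ^ 2) * Real.exp (-(x * (1 + α * x))) < 1 := by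
        rw [Real.exp_neg, mul_inv_lt_iff₀ hpos, one_mul]
        exact hE
      nlinarith [Real.exp_pos (-(x * (1 + α * x)))]
  -- h in terms of ψ on positives
  have hval : ∀ y : ℝ, 0 < y → h y = 1 / (β * ψ y) := by
    intro y hy
    simp only [h, hψ, if_neg (ne_of_gt hy)]
    have hne : (1 - Real.exp (-(y * (1 + α * y)))) ≠ 0 := ne_of_gt (hden y hy)
    field_simp
  have hψpos : ∀ y : ℝ, 0 < y → 0 < ψ y := fun y hy => div_pos (hden y hy) hy
  constructor
  · intro a ha b hb hab
    rcases eq_or_lt_of_le (Set.mem_Ici.mp ha) with h0 | h0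
    · -- a = 0
      subst h0
      rw [hval b hab]
      simp only [h, if_pos rfl]
      rw [div_lt_div_iff₀ hβ (mul_pos hβ (hψpos b hab))]
      have : ψ b < 1 := by
        rw [hψ]
        rw [div_lt_one hab]
        exact key0 b hab
      nlinarith
    · rw [hval a h0, hval b (h0.trans hab)]
      have := hanti (Set.mem_Ioi.mpr h0) (Set.mem_Ioi.mpr (h0.trans hab)) hab
      have pa := hψpos a h0
      have pb := hψpos b (h0.trans hab)
      rw [div_lt_div_iff₀ (mul_pos hβ pa) (mul_pos hβ pb)]
      nlinarith
  · -- tendsto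
    apply tendsto_atTop_mono' _ _ (Filter.Tendsto.atTop_div_const hβ tendsto_id)
    filter_upwards [Filter.eventually_ge_atTop (1:ℝ)] with y hy
    have hy0 : 0 < y := lt_of_lt_of_le one_pos hy
    simp only [h, if_neg (ne_of_gt hy0), id_eq]
    have h1 : 1 - Real.exp (-(y * (1 + α * y))) ≤ 1 :=
      by linarith [Real.exp_pos (-(y * (1 + α * y)))]
    have h2 : 0 < β * (1 - Real.exp (-(y * (1 + α * y)))) := by
      have := hden y hy0; positivity
    have h3 : β * (1 - Real.exp (-(y * (1 + α * y)))) ≤ β := by nlinarith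
    exact div_le_div_of_nonneg_left hy0.le h2 h3
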